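/- arXiv:1711.06197 — 2 statements merged into one kernel-verified Lean document; each statement's English description precedes it below -/
import Mathlib

section
/- For the Sibuya distribution with parameter 0 < α < 1, the probability that the sum of k independent Sibuya waiting times equals n is b(n,k) = (-1)^n ∑_{ℓ=0}^k (-1)^ℓ binom(k,ℓ) binom(ℓα, n). -/
open MeasureTheory

/-- The generalized binomial coefficient `binom(x, n) = (∏_{j=0}^{n-1}(x - j))/n!`. -/
noncomputable def gchoose (x : ℝ) (n : ℕ) : ℝ :=
  (∏ j ∈ Finset.range n, (x - (j : ℝ))) / (n.factorial : ℝ)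

/-! ### Auxiliary lemmas about `gchoose` -/

lemma gchoose_zero_right (x : ℝ) : gchoose x 0 = 1 := by simp [gchoose]

lemma gchoose_zero_left {n : ℕ} (hn : n ≠ 0) : gchoose 0 n = 0 := by
  obtain ⟨m, rfl⟩ := Nat.exists_eq_succ_of_ne_zero hn
  simp [gchoose, Finset.prod_range_succ']

lemma cast_prod_range_succ (m : ℕ) :
    (∏ j ∈ Finset.range m, ((j : ℝ) + 1)) = (m.factorial : ℝ) := by
  induction m with
  | zero => simp
  | succ m ih =>
      rw [Finset.prod_range_succ, ih, Nat.factorial_succ]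
      push_cast; ring

lemma succ_mul_gchoose (z : ℝ) (n : ℕ) :
    ((n : ℝ) + 1) * gchoose z (n + 1) = z * gchoose (z - 1) n := by
  have hfac : (n.factorial : ℝ) ≠ 0 := by
    exact_mod_cast Nat.factorial_ne_zero n
  have hn1 : ((n : ℝ) + 1) ≠ 0 := by positivity
  have hprod : (∏ j ∈ Finset.range (n + 1), (z - (j : ℝ)))
      = (∏ j ∈ Finset.range n, ((z - 1) - (j : ℝ))) * z := by
    rw [Finset.prod_range_succ' (fun j => z - (j : ℝ)) n]
    congr 1
    · exact Finset.prod_congr rfl fun j _ => by push_cast; ring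
    · simp
  rw [gchoose, gchoose, hprod, Nat.factorial_succ]
  push_cast
  field_simp

lemma gchoose_vandermonde : ∀ (n : ℕ) (x y : ℝ),
    ∑ m ∈ Finset.range (n + 1), gchoose x m * gchoose y (n - m) = gchoose (x + y) n := by
  intro n
  induction n with
  | zero => intro x y; simp [gchoose]
  | succ n ih =>
    intro x y
    have hne : ((n : ℝ) + 1) ≠ 0 := by positivity
    apply mul_left_cancel₀ hne
    have hA : ∑ m ∈ Finset.range (n + 2), (m : ℝ) * (gchoose x m * gchoose y (n + 1 - m))
        = x * gchoose ((x - 1) + y) n := by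
      rw [Finset.sum_range_succ'
        (fun m => (m : ℝ) * (gchoose x m * gchoose y (n + 1 - m))) (n + 1)]
      have h1 : ∀ i ∈ Finset.range (n + 1),
          ((i + 1 : ℕ) : ℝ) * (gchoose x (i + 1) * gchoose y (n + 1 - (i + 1)))
          = x * (gchoose (x - 1) i * gchoose y (n - i)) := by
        intro i _
        have hidx : n + 1 - (i + 1) = n - i := by omega
        rw [hidx]
        have := succ_mul_gchoose x i
        push_cast
        calc ((i : ℝ) + 1) * (gchoose x (i + 1) * gchoose y (n - i))
            = (((i : ℝ) + 1) * gchoose x (i + 1)) * gchoose y (n - i) := by ring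
          _ = (x * gchoose (x - 1) i) * gchoose y (n - i) := by rw [this]
          _ = x * (gchoose (x - 1) i * gchoose y (n - i)) := by ring
      rw [Finset.sum_congr rfl h1, ← Finset.mul_sum, ih (x - 1) y]
      simp
    have hB : ∑ m ∈ Finset.range (n + 2),
          ((n + 1 - m : ℕ) : ℝ) * (gchoose x m * gchoose y (n + 1 - m))
        = y * gchoose (x + (y - 1)) n := by
      rw [Finset.sum_range_succ]
      have h0 : ((n + 1 - (n + 1) : ℕ) : ℝ) = 0 := by norm_num
      rw [h0, zero_mul, add_zero]
      have h1 : ∀ m ∈ Finset.range (n + 1),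
          ((n + 1 - m : ℕ) : ℝ) * (gchoose x m * gchoose y (n + 1 - m))
          = y * (gchoose x m * gchoose (y - 1) (n - m)) := by
        intro m hm
        have hmn : m ≤ n := Nat.lt_succ_iff.mp (Finset.mem_range.mp hm)
        have hidx : n + 1 - m = (n - m) + 1 := by omega
        rw [hidx]
        have : (((n - m : ℕ) : ℝ) + 1) * gchoose y ((n - m) + 1)
            = y * gchoose (y - 1) (n - m) := succ_mul_gchoose y (n - m)
        push_cast
        calc (((n - m : ℕ) : ℝ) + 1) * (gchoose x m * gchoose y ((n - m) + 1))
            = ((((n - m : ℕ) : ℝ)) + 1) * gchoose y ((n - m) + 1) * gchoose x m := by ring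
          _ = y * gchoose (y - 1) (n - m) * gchoose x m := by rw [this]
          _ = y * (gchoose x m * gchoose (y - 1) (n - m)) := by ring
      rw [Finset.sum_congr rfl h1, ← Finset.mul_sum, ih x (y - 1)]
    have hsplit : ((n : ℝ) + 1) * ∑ m ∈ Finset.range (n + 1 + 1),
          gchoose x m * gchoose y (n + 1 - m)
        = (∑ m ∈ Finset.range (n + 2), (m : ℝ) * (gchoose x m * gchoose y (n + 1 - m)))
          + ∑ m ∈ Finset.range (n + 2),
              ((n + 1 - m : ℕ) : ℝ) * (gchoose x m * gchoose y (n + 1 - m)) := by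
      rw [Finset.mul_sum, ← Finset.sum_add_distrib]
      refine Finset.sum_congr rfl fun m hm => ?_
      have hm' : m ≤ n + 1 := Nat.lt_succ_iff.mp (Finset.mem_range.mp hm)
      have : ((n + 1 - m : ℕ) : ℝ) = ((n : ℝ) + 1) - m := by
        rw [Nat.cast_sub hm']; push_cast; ring
      rw [this]; ring
    rw [hsplit, hA, hB]
    have hgoal : ((n : ℝ) + 1) * gchoose (x + y) (n + 1)
        = (x + y) * gchoose (x + y - 1) n := succ_mul_gchoose (x + y) n
    rw [hgoal]
    have e1 : (x - 1) + y = x + y - 1 := by ring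
    have e2 : x + (y - 1) = x + y - 1 := by ring
    rw [e1, e2]
    ring

/-! ### The Sibuya pmf -/

/-- The Sibuya pmf. -/
noncomputable def sibuyaF (α : ℝ) (m : ℕ) : ℝ :=
  if m = 0 then 0 else (α / m) * ∏ ℓ ∈ Finset.Icc 1 (m - 1), (1 - α / (ℓ : ℝ))

lemma sibuyaF_nonneg {α : ℝ} (hα0 : 0 < α) (hα1 : α < 1) (m : ℕ) : 0 ≤ sibuyaF α m := by
  unfold sibuyaF
  cases m with
  | zero => simp
  | succ m' =>
    simp only [Nat.succ_ne_zero, if_false]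
    apply mul_nonneg
    · positivity
    · apply Finset.prod_nonneg
      intro ℓ hℓ
      have h1 : 1 ≤ ℓ := (Finset.mem_Icc.mp hℓ).1
      have hℓr : (1 : ℝ) ≤ ℓ := by exact_mod_cast h1
      have : α / (ℓ : ℝ) ≤ α / 1 := by
        apply div_le_div_of_nonneg_left hα0.le _ hℓr
        norm_num
      simp only [div_one] at this
      linarith

lemma sibuyaF_eq (α : ℝ) (m : ℕ) :
    sibuyaF α m = (if m = 0 then (1 : ℝ) else 0) - (-1 : ℝ) ^ m * gchoose α m := by
  cases m with
  | zero => simp [sibuyaF, gchoose]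
  | succ m' =>
    simp only [sibuyaF, Nat.succ_ne_zero, if_false, Nat.succ_sub_one]
    have hIcc : (∏ ℓ ∈ Finset.Icc 1 m', (1 - α / (ℓ : ℝ)))
        = ∏ j ∈ Finset.range m', (1 - α / ((j : ℝ) + 1)) := by
      rw [← Finset.Ico_add_one_right_eq_Icc, Finset.prod_Ico_eq_prod_range]
      refine Finset.prod_congr rfl fun j _ => ?_
      have : ((1 + j : ℕ) : ℝ) = (j : ℝ) + 1 := by push_cast; ring
      rw [this]
    set P : ℝ := ∏ j ∈ Finset.range m', (1 - α / ((j : ℝ) + 1)) with hP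
    have hprod : (∏ j ∈ Finset.range (m' + 1), (α - (j : ℝ)))
        = ((-1 : ℝ) ^ m' * (m'.factorial : ℝ) * P) * α := by
      rw [Finset.prod_range_succ' (fun j => α - (j : ℝ)) m']
      have h1 : ∀ j ∈ Finset.range m',
          (α - ((j + 1 : ℕ) : ℝ)) = (-1) * (((j : ℝ) + 1) * (1 - α / ((j : ℝ) + 1))) := by
        intro j _
        have hj : ((j : ℝ) + 1) ≠ 0 := by positivity
        field_simp
        push_cast; ring
      rw [Finset.prod_congr rfl h1, Finset.prod_mul_distrib, Finset.prod_mul_distrib,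
        Finset.prod_const, Finset.card_range, cast_prod_range_succ]
      push_cast
      ring
    have hm1 : ((m' : ℝ) + 1) ≠ 0 := by positivity
    have hfac : (m'.factorial : ℝ) ≠ 0 := by exact_mod_cast Nat.factorial_ne_zero m'
    have hsq : (-1 : ℝ) ^ m' * (-1 : ℝ) ^ m' = 1 := by
      rw [← pow_add]
      exact Even.neg_one_pow ⟨m', rfl⟩
    rw [hIcc, gchoose, hprod, Nat.factorial_succ]
    have hcast : (((m' + 1) * m'.factorial : ℕ) : ℝ) = ((m' : ℝ) + 1) * (m'.factorial : ℝ) := by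
      push_cast; ring
    rw [hcast, pow_succ]
    rw [show (0 : ℝ) - (-1:ℝ)^m' * (-1) * ((((-1:ℝ)^m' * (m'.factorial:ℝ) * P) * α)
        / (((m':ℝ)+1) * (m'.factorial:ℝ)))
      = ((-1:ℝ)^m' * (-1:ℝ)^m') * ((m'.factorial:ℝ) * P * α / (((m':ℝ)+1) * (m'.factorial:ℝ)))
      from by ring, hsq]
    rw [Nat.cast_succ]
    field_simp

/-! ### The convolution sequence -/

/-- `sibuyaB α k n` is the `k`-fold convolution of the Sibuya pmf, evaluated at `n`. -/
noncomputable def sibuyaB (α : ℝ) : ℕ → ℕ → ℝ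
  | 0 => fun n => if n = 0 then 1 else 0
  | (k + 1) => fun n => ∑ m ∈ Finset.range (n + 1), sibuyaB α k (n - m) * sibuyaF α m

lemma pascal_sum (k : ℕ) (g : ℕ → ℝ) :
    ∑ ℓ ∈ Finset.range (k + 2), (-1 : ℝ) ^ ℓ * ((k + 1).choose ℓ : ℝ) * g ℓ
    = ∑ ℓ ∈ Finset.range (k + 1), (-1 : ℝ) ^ ℓ * (k.choose ℓ : ℝ) * g ℓ
      + ∑ ℓ ∈ Finset.range (k + 1), (-1 : ℝ) ^ (ℓ + 1) * (k.choose ℓ : ℝ) * g (ℓ + 1) := by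
  rw [Finset.sum_range_succ'
    (fun ℓ => (-1 : ℝ) ^ ℓ * ((k + 1).choose ℓ : ℝ) * g ℓ) (k + 1)]
  have h1 : ∀ i ∈ Finset.range (k + 1),
      (-1 : ℝ) ^ (i + 1) * ((k + 1).choose (i + 1) : ℝ) * g (i + 1)
      = (-1 : ℝ) ^ (i + 1) * (k.choose i : ℝ) * g (i + 1)
        + (-1 : ℝ) ^ (i + 1) * (k.choose (i + 1) : ℝ) * g (i + 1) := by
    intro i _
    rw [Nat.choose_succ_succ]
    push_cast
    ring
  rw [Finset.sum_congr rfl h1, Finset.sum_add_distrib]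
  have h2 : ∑ i ∈ Finset.range (k + 1), (-1 : ℝ) ^ (i + 1) * (k.choose (i + 1) : ℝ) * g (i + 1)
        + (-1 : ℝ) ^ 0 * ((k + 1).choose 0 : ℝ) * g 0
      = ∑ ℓ ∈ Finset.range (k + 1), (-1 : ℝ) ^ ℓ * (k.choose ℓ : ℝ) * g ℓ := by
    rw [Finset.sum_range_succ, Nat.choose_succ_self]
    rw [Finset.sum_range_succ' (fun ℓ => (-1 : ℝ) ^ ℓ * (k.choose ℓ : ℝ) * g ℓ) k]
    simp
  linarith [h2]

lemma sibuyaB_eq {α : ℝ} (hα0 : 0 < α) (hα1 : α < 1) (k : ℕ) : ∀ n : ℕ,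
    sibuyaB α k n = (-1 : ℝ) ^ n * ∑ ℓ ∈ Finset.range (k + 1),
      (-1 : ℝ) ^ ℓ * (k.choose ℓ : ℝ) * gchoose ((ℓ : ℝ) * α) n := by
  induction k with
  | zero =>
    intro n
    by_cases hn : n = 0
    · subst hn; simp [sibuyaB, gchoose]
    · simp [sibuyaB, hn, gchoose_zero_left hn]
  | succ k ih =>
    intro n
    show (∑ m ∈ Finset.range (n + 1), sibuyaB α k (n - m) * sibuyaF α m) = _
    have hstep : ∀ m ∈ Finset.range (n + 1),
        sibuyaB α k (n - m) * sibuyaF α m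
        = sibuyaB α k (n - m) * (if m = 0 then (1 : ℝ) else 0)
          - sibuyaB α k (n - m) * ((-1 : ℝ) ^ m * gchoose α m) := by
      intro m _
      rw [sibuyaF_eq]
      ring
    rw [Finset.sum_congr rfl hstep, Finset.sum_sub_distrib]
    have hfirst : (∑ m ∈ Finset.range (n + 1),
        sibuyaB α k (n - m) * (if m = 0 then (1 : ℝ) else 0)) = sibuyaB α k n := by
      rw [Finset.sum_eq_single 0]
      · simp
      · intro m _ hm; simp [hm]
      · intro h; exact absurd (Finset.mem_range.mpr (Nat.succ_pos n)) h
    rw [hfirst]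
    have hsecond : (∑ m ∈ Finset.range (n + 1),
          sibuyaB α k (n - m) * ((-1 : ℝ) ^ m * gchoose α m))
        = (-1 : ℝ) ^ n * ∑ ℓ ∈ Finset.range (k + 1),
            (-1 : ℝ) ^ ℓ * (k.choose ℓ : ℝ) * gchoose (((ℓ : ℝ) + 1) * α) n := by
      have hterm : ∀ m ∈ Finset.range (n + 1),
          sibuyaB α k (n - m) * ((-1 : ℝ) ^ m * gchoose α m)
          = (-1 : ℝ) ^ n * ∑ ℓ ∈ Finset.range (k + 1),
              (-1 : ℝ) ^ ℓ * (k.choose ℓ : ℝ)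
                * (gchoose α m * gchoose ((ℓ : ℝ) * α) (n - m)) := by
        intro m hm
        have hmn : m ≤ n := Nat.lt_succ_iff.mp (Finset.mem_range.mp hm)
        rw [ih (n - m)]
        have hpow : (-1 : ℝ) ^ (n - m) * (-1 : ℝ) ^ m = (-1 : ℝ) ^ n := by
          rw [← pow_add]
          congr 1
          omega
        simp only [Finset.mul_sum, Finset.sum_mul]
        refine Finset.sum_congr rfl fun ℓ _ => ?_
        calc (-1 : ℝ) ^ (n - m) * ((-1 : ℝ) ^ ℓ * (k.choose ℓ : ℝ) * gchoose ((ℓ : ℝ) * α) (n - m))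
              * ((-1 : ℝ) ^ m * gchoose α m)
            = ((-1 : ℝ) ^ (n - m) * (-1 : ℝ) ^ m)
              * ((-1 : ℝ) ^ ℓ * (k.choose ℓ : ℝ)
                * (gchoose α m * gchoose ((ℓ : ℝ) * α) (n - m))) := by ring
          _ = (-1 : ℝ) ^ n * ((-1 : ℝ) ^ ℓ * (k.choose ℓ : ℝ)
                * (gchoose α m * gchoose ((ℓ : ℝ) * α) (n - m))) := by rw [hpow]
      rw [Finset.sum_congr rfl hterm, ← Finset.mul_sum, Finset.sum_comm]
      congr 1
      refine Finset.sum_congr rfl fun ℓ _ => ?_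
      rw [← Finset.mul_sum, gchoose_vandermonde n α ((ℓ : ℝ) * α)]
      have : α + (ℓ : ℝ) * α = ((ℓ : ℝ) + 1) * α := by ring
      rw [this]
    rw [hsecond, ih n]
    rw [show (k + 1 + 1) = k + 2 from rfl,
      pascal_sum k (fun ℓ => gchoose ((ℓ : ℝ) * α) n)]
    have hre : ∀ ℓ : ℕ, gchoose (((ℓ : ℝ) + 1) * α) n = gchoose (((ℓ + 1 : ℕ) : ℝ) * α) n := by
      intro ℓ; push_cast; ring_nf
    have hre2 : (∑ ℓ ∈ Finset.range (k + 1),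
          (-1 : ℝ) ^ ℓ * (k.choose ℓ : ℝ) * gchoose (((ℓ : ℝ) + 1) * α) n)
        = ∑ ℓ ∈ Finset.range (k + 1),
          (-1 : ℝ) ^ ℓ * (k.choose ℓ : ℝ) * gchoose (((ℓ + 1 : ℕ) : ℝ) * α) n :=
      Finset.sum_congr rfl fun ℓ _ => by rw [hre ℓ]
    rw [hre2]
    have hneg : (∑ ℓ ∈ Finset.range (k + 1),
          (-1 : ℝ) ^ (ℓ + 1) * (k.choose ℓ : ℝ) * gchoose (((ℓ + 1 : ℕ) : ℝ) * α) n)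
        = -∑ ℓ ∈ Finset.range (k + 1),
          (-1 : ℝ) ^ ℓ * (k.choose ℓ : ℝ) * gchoose (((ℓ + 1 : ℕ) : ℝ) * α) n := by
      rw [← Finset.sum_neg_distrib]
      refine Finset.sum_congr rfl fun ℓ _ => ?_
      rw [pow_succ]
      ring
    rw [hneg]
    ring

/-! ### The measure-theoretic convolution step -/

open ProbabilityTheory in
lemma measure_sum_eq_sibuyaB
    (α : ℝ) (hα0 : 0 < α) (hα1 : α < 1)
    {Ω : Type*} [MeasurableSpace Ω] (μ : Measure Ω) [IsProbabilityMeasure μ]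
    (W : ℕ → Ω → ℕ) (hmeas : ∀ i, Measurable (W i))
    (hindep : ProbabilityTheory.iIndepFun W μ)
    (hdist : ∀ i m, μ {ω | W i ω = m} = ENNReal.ofReal (sibuyaF α m))
    (k : ℕ) : ∀ n : ℕ,
    (μ {ω | ∑ i ∈ Finset.range k, W i ω = n}).toReal = sibuyaB α k n := by
  induction k with
  | zero =>
    intro n
    by_cases hn : n = 0
    · subst hn
      have : {ω : Ω | ∑ i ∈ Finset.range 0, W i ω = 0} = Set.univ := by
        ext ω; simp
      rw [this]
      simp [sibuyaB]
    · have : {ω : Ω | ∑ i ∈ Finset.range 0, W i ω = n} = ∅ := by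
        ext ω; simp [Ne.symm hn]
      rw [this]
      simp [sibuyaB, hn]
  | succ k ih =>
    intro n
    have hS : Measurable (fun ω => ∑ i ∈ Finset.range k, W i ω) :=
      Finset.measurable_sum _ fun i _ => hmeas i
    have hSfun : (∑ i ∈ Finset.range k, W i) = (fun ω => ∑ i ∈ Finset.range k, W i ω) := by
      funext ω; exact Finset.sum_apply ω (Finset.range k) W
    have hindepk : IndepFun (fun ω => ∑ i ∈ Finset.range k, W i ω) (W k) μ := by
      rw [← hSfun]
      exact hindep.indepFun_sum_range_succ hmeas k
    have hset : {ω : Ω | ∑ i ∈ Finset.range (k + 1), W i ω = n}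
        = ⋃ m ∈ Finset.range (n + 1),
            ((fun ω => ∑ i ∈ Finset.range k, W i ω) ⁻¹' {n - m} ∩ (W k) ⁻¹' {m}) := by
      ext ω
      simp only [Set.mem_setOf_eq, Finset.sum_range_succ, Set.mem_iUnion,
        Set.mem_inter_iff, Finset.mem_range, Set.mem_preimage, Set.mem_singleton_iff]
      constructor
      · intro h
        exact ⟨W k ω, by omega, by omega, rfl⟩
      · rintro ⟨m, hm, h1, h2⟩
        omega
    rw [hset]
    rw [measure_biUnion_finset]
    · rw [ENNReal.toReal_sum (fun m _ => measure_ne_top μ _)]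
      show (∑ m ∈ Finset.range (n + 1), _) = sibuyaB α (k + 1) n
      have : ∀ m ∈ Finset.range (n + 1),
          (μ ((fun ω => ∑ i ∈ Finset.range k, W i ω) ⁻¹' {n - m} ∩ (W k) ⁻¹' {m})).toReal
          = sibuyaB α k (n - m) * sibuyaF α m := by
        intro m _
        rw [hindepk.measure_inter_preimage_eq_mul _ _ (measurableSet_singleton (n - m))
          (measurableSet_singleton m)]
        rw [ENNReal.toReal_mul]
        congr 1
        · exact ih (n - m)
        · have : (W k) ⁻¹' {m} = {ω | W k ω = m} := rfl
          rw [this, hdist k m, ENNReal.toReal_ofReal (sibuyaF_nonneg hα0 hα1 m)]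
      rw [Finset.sum_congr rfl this]
      rfl
    · intro m₁ hm₁ m₂ hm₂ hne
      simp only [Function.onFun]
      apply Set.disjoint_left.mpr
      rintro ω ⟨_, h1⟩ ⟨_, h2⟩
      simp only [Set.mem_preimage, Set.mem_singleton_iff] at h1 h2
      exact hne (h1 ▸ h2 ▸ rfl)
    · intro m _
      exact (hS (measurableSet_singleton _)).inter ((hmeas k) (measurableSet_singleton _))

/-- For the Sibuya distribution with parameter `0 < α < 1`, the probability
that the sum of `k` independent Sibuya waiting times equals `n` is
`b(n,k) = (-1)^n ∑_{ℓ=0}^k (-1)^ℓ binom(k,ℓ) binom(ℓα, n)`. -/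
theorem sibuya_k_fold_sum_distribution
    (α : ℝ) (hα0 : 0 < α) (hα1 : α < 1)
    {Ω : Type*} [MeasurableSpace Ω] (μ : Measure Ω) [IsProbabilityMeasure μ]
    (W : ℕ → Ω → ℕ) (hmeas : ∀ i, Measurable (W i))
    (hindep : ProbabilityTheory.iIndepFun W μ)
    (hdist : ∀ i m, μ {ω | W i ω = m} = ENNReal.ofReal
      (if m = 0 then 0 else (α / m) * ∏ ℓ ∈ Finset.Icc 1 (m - 1), (1 - α / (ℓ : ℝ))))
    (k : ℕ) (hk : 1 ≤ k) (n : ℕ) :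
    (μ {ω | ∑ i ∈ Finset.range k, W i ω = n}).toReal =
      (-1 : ℝ) ^ n * ∑ ℓ ∈ Finset.range (k + 1),
        (-1 : ℝ) ^ ℓ * (k.choose ℓ : ℝ) * gchoose ((ℓ : ℝ) * α) n := by
  have hdist' : ∀ i m, μ {ω | W i ω = m} = ENNReal.ofReal (sibuyaF α m) := hdist
  rw [measure_sum_eq_sibuyaB α hα0 hα1 μ W hmeas hindep hdist' k n]
  exact sibuyaB_eq hα0 hα1 k n
end

section
/- For each fixed n ∈ ℕ and 0 < α < 1, ∑_{k=0}^∞ (-1)^n ∑_{ℓ=0}^k (-1)^ℓ binom(k,ℓ) binom((ℓ+1)α - 1, n) = 1; that is, the probabilities ℙ[T_k ≤ n < T_{k+1}] sum to 1 over k (the sum is finite since the terms vanish for k > n). -/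
open Finset Polynomial

/-- Rearrangement step for alternating binomial sums. -/
lemma step_sum (k : ℕ) (f : ℕ → ℝ) :
    ∑ ℓ ∈ range (k+2), (-1:ℝ)^ℓ * (((k+1).choose ℓ : ℕ) : ℝ) * f ℓ
      = ∑ ℓ ∈ range (k+1), (-1:ℝ)^ℓ * ((k.choose ℓ : ℕ) : ℝ) * (f ℓ - f (ℓ+1)) := by
  have hT : ∑ ℓ ∈ range (k+2), (-1:ℝ)^ℓ * ((k.choose ℓ : ℕ) : ℝ) * f ℓ
      = ∑ ℓ ∈ range (k+1), (-1:ℝ)^ℓ * ((k.choose ℓ : ℕ) : ℝ) * f ℓ := by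
    rw [Finset.sum_range_succ]
    simp [Nat.choose_succ_self]
  have hT' : ∑ ℓ ∈ range (k+2), (-1:ℝ)^ℓ * ((k.choose ℓ : ℕ) : ℝ) * f ℓ
      = (∑ ℓ ∈ range (k+1), (-1:ℝ)^(ℓ+1) * ((k.choose (ℓ+1) : ℕ) : ℝ) * f (ℓ+1))
        + f 0 := by
    rw [Finset.sum_range_succ']
    simp
  have hL : ∑ ℓ ∈ range (k+2), (-1:ℝ)^ℓ * (((k+1).choose ℓ : ℕ) : ℝ) * f ℓ
      = (∑ ℓ ∈ range (k+1), (-1:ℝ)^(ℓ+1) * (((k+1).choose (ℓ+1) : ℕ) : ℝ) * f (ℓ+1))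
        + f 0 := by
    rw [Finset.sum_range_succ']
    simp
  rw [hL]
  have : ∀ ℓ, ((k+1).choose (ℓ+1) : ℝ) = (k.choose ℓ : ℝ) + (k.choose (ℓ+1) : ℝ) := by
    intro ℓ; rw [Nat.choose_succ_succ]; push_cast; ring
  calc (∑ ℓ ∈ range (k+1), (-1:ℝ)^(ℓ+1) * (((k+1).choose (ℓ+1) : ℕ) : ℝ) * f (ℓ+1)) + f 0
      = (∑ ℓ ∈ range (k+1), ((-1:ℝ)^(ℓ+1) * ((k.choose ℓ : ℕ) : ℝ) * f (ℓ+1)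
          + (-1:ℝ)^(ℓ+1) * ((k.choose (ℓ+1) : ℕ) : ℝ) * f (ℓ+1))) + f 0 := by
        congr 1; apply Finset.sum_congr rfl; intro ℓ _; rw [this ℓ]; ring
    _ = (∑ ℓ ∈ range (k+1), (-1:ℝ)^(ℓ+1) * ((k.choose ℓ : ℕ) : ℝ) * f (ℓ+1))
        + ((∑ ℓ ∈ range (k+1), (-1:ℝ)^(ℓ+1) * ((k.choose (ℓ+1) : ℕ) : ℝ) * f (ℓ+1)) + f 0) := by
        rw [Finset.sum_add_distrib]; ring
    _ = (∑ ℓ ∈ range (k+1), (-1:ℝ)^(ℓ+1) * ((k.choose ℓ : ℕ) : ℝ) * f (ℓ+1))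
        + ∑ ℓ ∈ range (k+1), (-1:ℝ)^ℓ * ((k.choose ℓ : ℕ) : ℝ) * f ℓ := by
        rw [← hT', hT]
    _ = ∑ ℓ ∈ range (k+1), (-1:ℝ)^ℓ * ((k.choose ℓ : ℕ) : ℝ) * (f ℓ - f (ℓ+1)) := by
        rw [← Finset.sum_add_distrib]
        apply Finset.sum_congr rfl; intro ℓ _; ring

/-- The `k`-th finite difference of a polynomial of degree `< k` vanishes. -/
lemma alt_sum_choose_eval (k : ℕ) : ∀ p : Polynomial ℝ, p.degree < (k : WithBot ℕ) →
    ∑ ℓ ∈ range (k+1), (-1:ℝ)^ℓ * ((k.choose ℓ : ℕ) : ℝ) * p.eval (ℓ : ℝ) = 0 := by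
  induction k with
  | zero =>
    intro p hp
    have : p = 0 := by
      rw [← Polynomial.degree_eq_bot]
      exact Nat.WithBot.lt_zero_iff.mp (by exact_mod_cast hp)
    simp [this]
  | succ k ih =>
    intro p hp
    set q : Polynomial ℝ := p - p.comp (X + C 1) with hq
    have heval : ∀ ℓ : ℕ, q.eval (ℓ : ℝ) = p.eval (ℓ : ℝ) - p.eval ((ℓ:ℝ)+1) := by
      intro ℓ; simp [hq]
    have hdeg : q.degree < (k : WithBot ℕ) := by
      by_cases hp0 : p = 0
      · simp [hq, hp0]
      · have hdp : p.degree ≤ (k : WithBot ℕ) := by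
          rw [Polynomial.degree_eq_natDegree hp0] at hp ⊢
          have h1 : p.natDegree < k + 1 := by exact_mod_cast hp
          exact_mod_cast Nat.lt_succ_iff.mp h1
        have hcomp_ne : p.comp (X + C 1) ≠ 0 := by
          intro h
          apply hp0
          apply Polynomial.funext
          intro x
          have h2 := congrArg (Polynomial.eval (x - 1)) h
          simpa [Polynomial.eval_comp] using h2
        have hdegeq : (p.comp (X + C 1)).degree = p.degree := by
          rw [Polynomial.degree_eq_natDegree hp0, Polynomial.degree_eq_natDegree hcomp_ne,
            Polynomial.natDegree_comp, Polynomial.natDegree_X_add_C, mul_one]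
        have hlc : p.leadingCoeff = (p.comp (X + C 1)).leadingCoeff := by
          rw [Polynomial.leadingCoeff_comp (by
              rw [Polynomial.natDegree_X_add_C]; exact one_ne_zero),
            Polynomial.leadingCoeff_X_add_C, one_pow, mul_one]
        have := Polynomial.degree_sub_lt hdegeq.symm hp0 hlc
        exact lt_of_lt_of_le this hdp
    have key := step_sum k (fun ℓ => p.eval (ℓ : ℝ))
    have : ∑ ℓ ∈ range (k+2), (-1:ℝ)^ℓ * (((k+1).choose ℓ : ℕ) : ℝ) * p.eval (ℓ:ℝ)
        = ∑ ℓ ∈ range (k+1), (-1:ℝ)^ℓ * ((k.choose ℓ : ℕ) : ℝ) * q.eval (ℓ:ℝ) := by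
      rw [key]
      apply Finset.sum_congr rfl; intro ℓ _
      rw [heval ℓ]; push_cast; ring
    rw [show k + 1 + 1 = k + 2 from rfl, this]
    exact ih q hdeg

lemma prod_one_add_eq_factorial (n : ℕ) :
    ∏ j ∈ range n, (1 + (j:ℝ)) = (n.factorial : ℝ) := by
  induction n with
  | zero => simp
  | succ m ihm => rw [Finset.prod_range_succ, ihm, Nat.factorial_succ]; push_cast; ring

/-- The polynomial `m ↦ gchoose (m*α - 1) n`. -/
noncomputable def Qpoly (α : ℝ) (n : ℕ) : Polynomial ℝ :=
  C ((n.factorial : ℝ))⁻¹ * ∏ j ∈ range n, (C α * X - C (1 + (j : ℝ)))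

lemma Qpoly_eval (α : ℝ) (n : ℕ) (x : ℝ) :
    (Qpoly α n).eval x = gchoose (x * α - 1) n := by
  simp only [Qpoly, gchoose, Polynomial.eval_mul, Polynomial.eval_C, Polynomial.eval_prod]
  rw [div_eq_inv_mul]
  congr 1
  apply Finset.prod_congr rfl
  intro j _
  simp; ring

lemma Qpoly_degree (α : ℝ) (n : ℕ) : (Qpoly α n).degree ≤ (n : WithBot ℕ) := by
  have h1 : (Qpoly α n).natDegree ≤ n := by
    apply le_trans (Polynomial.natDegree_mul_le)
    simp only [Polynomial.natDegree_C, zero_add]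
    apply le_trans (Polynomial.natDegree_prod_le _ _)
    calc ∑ j ∈ range n, (C α * X - C (1 + (j:ℝ))).natDegree
        ≤ ∑ _j ∈ range n, 1 := by
          apply Finset.sum_le_sum
          intro j _
          apply le_trans (Polynomial.natDegree_sub_le _ _)
          simp only [Polynomial.natDegree_C, max_eq_left (Nat.zero_le _)]
          apply le_trans (Polynomial.natDegree_mul_le)
          simp
      _ = n := by simp
  calc (Qpoly α n).degree ≤ ((Qpoly α n).natDegree : WithBot ℕ) := Polynomial.degree_le_natDegree
    _ ≤ (n : WithBot ℕ) := by exact_mod_cast h1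

/-- For each fixed `n` and `0 < α < 1`,
`∑_{k=0}^∞ (-1)^n ∑_{ℓ=0}^k (-1)^ℓ binom(k,ℓ) binom((ℓ+1)α - 1, n) = 1`. -/
theorem sibuya_jump_probabilities_sum_to_one
    (α : ℝ) (hα0 : 0 < α) (hα1 : α < 1) (n : ℕ) :
    ∑' k : ℕ, ((-1 : ℝ) ^ n * ∑ ℓ ∈ Finset.range (k + 1),
      (-1 : ℝ) ^ ℓ * (k.choose ℓ : ℝ) * gchoose (((ℓ : ℝ) + 1) * α - 1) n) = 1 := by
  set q := Qpoly α n with hqdef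
  have hg : ∀ ℓ : ℕ, gchoose (((ℓ : ℝ) + 1) * α - 1) n = q.eval ((ℓ : ℝ) + 1) := by
    intro ℓ; rw [hqdef, Qpoly_eval]
  have hdeg : q.degree ≤ (n : WithBot ℕ) := Qpoly_degree α n
  -- terms vanish for k > n
  have hvanish : ∀ k : ℕ, n < k →
      ((-1 : ℝ) ^ n * ∑ ℓ ∈ Finset.range (k + 1),
        (-1 : ℝ) ^ ℓ * (k.choose ℓ : ℝ) * gchoose (((ℓ : ℝ) + 1) * α - 1) n) = 0 := by
    intro k hk
    have hd : (q.comp (X + C 1)).degree < (k : WithBot ℕ) := by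
      apply lt_of_le_of_lt (Polynomial.degree_le_natDegree)
      rw [Polynomial.natDegree_comp, Polynomial.natDegree_X_add_C, mul_one]
      have hqn : q.natDegree ≤ n := Polynomial.natDegree_le_iff_degree_le.mpr hdeg
      exact_mod_cast lt_of_le_of_lt hqn hk
    have h0 := alt_sum_choose_eval k (q.comp (X + C 1)) hd
    have : ∑ ℓ ∈ Finset.range (k + 1),
        (-1 : ℝ) ^ ℓ * (k.choose ℓ : ℝ) * gchoose (((ℓ : ℝ) + 1) * α - 1) n = 0 := by
      rw [← h0]
      apply Finset.sum_congr rfl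
      intro ℓ _
      rw [hg ℓ]
      simp [Polynomial.eval_comp]
    rw [this, mul_zero]
  rw [tsum_eq_sum (s := Finset.range (n+1)) (by
    intro k hk
    exact hvanish k (by simpa using Nat.lt_of_succ_le (Nat.succ_le_of_lt (by
      simpa [Finset.mem_range, not_lt] using hk))))]
  -- now a finite double sum; swap order
  rw [← Finset.mul_sum]
  have hswap : ∑ k ∈ Finset.range (n+1), ∑ ℓ ∈ Finset.range (k + 1),
      (-1 : ℝ) ^ ℓ * (k.choose ℓ : ℝ) * gchoose (((ℓ : ℝ) + 1) * α - 1) n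
      = ∑ ℓ ∈ Finset.range (n+1),
          (-1 : ℝ) ^ ℓ * gchoose (((ℓ : ℝ) + 1) * α - 1) n
            * ∑ k ∈ Finset.Ico ℓ (n+1), (k.choose ℓ : ℝ) := by
    calc ∑ k ∈ Finset.range (n+1), ∑ ℓ ∈ Finset.range (k + 1),
          (-1 : ℝ) ^ ℓ * (k.choose ℓ : ℝ) * gchoose (((ℓ : ℝ) + 1) * α - 1) n
        = ∑ k ∈ Finset.Ico 0 (n+1), ∑ ℓ ∈ Finset.Ico 0 (k + 1),
          (-1 : ℝ) ^ ℓ * (k.choose ℓ : ℝ) * gchoose (((ℓ : ℝ) + 1) * α - 1) n := by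
          simp only [Finset.range_eq_Ico]
      _ = ∑ ℓ ∈ Finset.Ico 0 (n+1), ∑ k ∈ Finset.Ico ℓ (n+1),
          (-1 : ℝ) ^ ℓ * (k.choose ℓ : ℝ) * gchoose (((ℓ : ℝ) + 1) * α - 1) n :=
          (Finset.sum_Ico_Ico_comm 0 (n+1)
            (fun ℓ k => (-1 : ℝ) ^ ℓ * (k.choose ℓ : ℝ)
              * gchoose (((ℓ : ℝ) + 1) * α - 1) n)).symm
      _ = ∑ ℓ ∈ Finset.range (n+1),
          (-1 : ℝ) ^ ℓ * gchoose (((ℓ : ℝ) + 1) * α - 1) n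
            * ∑ k ∈ Finset.Ico ℓ (n+1), (k.choose ℓ : ℝ) := by
          rw [Finset.range_eq_Ico]
          apply Finset.sum_congr rfl
          intro ℓ _
          rw [Finset.mul_sum]
          apply Finset.sum_congr rfl
          intro k _
          ring
  rw [hswap]
  -- hockey stick
  have hhs : ∀ ℓ : ℕ, ∑ k ∈ Finset.Ico ℓ (n+1), ((k.choose ℓ : ℕ) : ℝ)
      = (((n+1).choose (ℓ+1) : ℕ) : ℝ) := by
    intro ℓ
    rw [← Nat.cast_sum]
    congr 1
    rw [show Finset.Ico ℓ (n+1) = Finset.Icc ℓ n from rfl]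
    exact Nat.sum_Icc_choose n ℓ
  -- final identity via the (n+1)-th finite difference of q
  have hd2 : q.degree < ((n+1 : ℕ) : WithBot ℕ) :=
    lt_of_le_of_lt hdeg (by exact_mod_cast Nat.lt_succ_self n)
  have h0 := alt_sum_choose_eval (n+1) q hd2
  rw [Finset.sum_range_succ'] at h0
  -- h0 : ∑_{ℓ ∈ range (n+1)} (-1)^(ℓ+1) C(n+1,ℓ+1) q.eval(ℓ+1) + C(n+1,0) q.eval 0 = 0
  have hq0 : q.eval (0 : ℝ) = (-1:ℝ)^n := by
    rw [hqdef, Qpoly_eval]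
    simp only [gchoose, zero_mul, zero_sub]
    rw [show ∏ j ∈ range n, (-1 - (j:ℝ)) = ∏ j ∈ range n, (-1) * (1 + (j:ℝ)) from by
      apply Finset.prod_congr rfl; intro j _; ring]
    rw [Finset.prod_mul_distrib, Finset.prod_const]
    rw [prod_one_add_eq_factorial n]
    field_simp
    rw [Finset.card_range]
  simp only [Nat.cast_zero, Nat.choose_zero_right, Nat.cast_one, pow_zero, one_mul,
    Nat.cast_ofNat] at h0
  rw [hq0] at h0
  have hfin : ∑ ℓ ∈ Finset.range (n+1),
      (-1 : ℝ) ^ ℓ * gchoose (((ℓ : ℝ) + 1) * α - 1) n * (((n+1).choose (ℓ+1) : ℕ) : ℝ)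
      = (-1:ℝ)^n := by
    have : ∑ ℓ ∈ Finset.range (n+1),
        (-1 : ℝ) ^ ℓ * gchoose (((ℓ : ℝ) + 1) * α - 1) n * (((n+1).choose (ℓ+1) : ℕ) : ℝ)
        = - ∑ ℓ ∈ Finset.range (n+1),
            (-1:ℝ)^(ℓ+1) * (((n+1).choose (ℓ+1) : ℕ) : ℝ) * q.eval (((ℓ:ℝ))+1) := by
      rw [← Finset.sum_neg_distrib]
      apply Finset.sum_congr rfl
      intro ℓ _
      rw [hg ℓ]
      push_cast
      ring
    rw [this]
    have h1 : ∑ ℓ ∈ Finset.range (n+1),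
        (-1:ℝ)^(ℓ+1) * (((n+1).choose (ℓ+1) : ℕ) : ℝ) * q.eval (((ℓ:ℝ))+1) = -(-1:ℝ)^n := by
      have := h0
      push_cast at this ⊢
      linarith
    rw [h1]; ring
  rw [show ∑ ℓ ∈ Finset.range (n+1), (-1 : ℝ) ^ ℓ * gchoose (((ℓ : ℝ) + 1) * α - 1) n
      * ∑ k ∈ Finset.Ico ℓ (n+1), (k.choose ℓ : ℝ)
      = ∑ ℓ ∈ Finset.range (n+1), (-1 : ℝ) ^ ℓ * gchoose (((ℓ : ℝ) + 1) * α - 1) n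
        * (((n+1).choose (ℓ+1) : ℕ) : ℝ) from by
    apply Finset.sum_congr rfl; intro ℓ _; rw [← hhs ℓ]]
  rw [hfin]
  rw [← pow_add]
  simp [pow_mul]
end
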